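/- Let a > 0, let U_s : (0, ∞) → ℝ be three times continuously differentiable, suppose U_s(a) = U_s'(a) = 0, and set b := U_s''(a). Let τ ∈ ℂ, ε > 0, and let V : ℝ → ℂ be three times continuously differentiable on ℝ ∖ {0} and satisfy τ·[(τ + b·z²/2)·V'(z) − b·z·V(z)] + V'''(z) = 0 for every z ≠ 0. Define 𝕍_ε(y) := (U_s(y) + ε^{2/3}·τ)·H(y − a) + ε^{2/3}·V((y − a)/ε^{1/3}) for y > 0, and for y > 0 with y ≠ a define, writing z := (y − a)/ε^{1/3}, ℛ_ε(y) := ε·[ iτ·( (ε^{−2/3}·U_s(y) − (b/2)·z²)·V'(z) − (ε^{−1/3}·U_s'(y) − b·z)·V(z) ) + ε^{1/3}·( τ·V'(z) + ε^{−2/3}·U_s(y)·V'(z) − ε^{−1/3}·U_s'(y)·V(z) ) + i·ε^{1/3}·H(y − a)·U_s'''(y) ]. Then for every y > 0 with y ≠ a, the function 𝕍_ε is three times differentiable at y and (iτ + ε^{1/3})·[ (ε^{2/3}·τ + U_s(y))·𝕍_ε'(y) − U_s'(y)·𝕍_ε(y) ] + i·ε^{4/3}·𝕍_ε'''(y) =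 ℛ_ε(y). -/

import Mathlib

/-- The Heaviside function with `H(z) = 1` for `z > 0` and `H(z) = 0` for `z ≤ 0`,
viewed as a complex-valued function. -/
noncomputable def Heav (z : ℝ) : ℂ := if 0 < z then 1 else 0

set_option maxHeartbeats 2000000 in
/-- The pointwise verification (away from `y = a`) underlying Proposition 2.1 of
the paper: the boundary-layer Ansatz `𝕍_ε` solves the reduced hyperbolic Prandtl
equation at frequency `k = 1/ε` up to the explicit remainder `ℛ_ε`. -/
theorem stmt11 (a : ℝ) (ha : 0 < a) (Us : ℝ → ℝ)
    (hUs : ContDiffOn ℝ 3 Us (Set.Ioi 0))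
    (hUa : Us a = 0) (hUa' : deriv Us a = 0)
    (b : ℝ) (hb : b = deriv (deriv Us) a)
    (τ : ℂ) (ε : ℝ) (hε : 0 < ε)
    (V : ℝ → ℂ) (hV : ContDiffOn ℝ 3 V {(0 : ℝ)}ᶜ)
    (hVeq : ∀ z : ℝ, z ≠ 0 →
      τ * ((τ + (b : ℂ) * (z : ℂ) ^ 2 / 2) * deriv V z
          - (b : ℂ) * (z : ℂ) * V z) + iteratedDeriv 3 V z = 0)
    (Vε : ℝ → ℂ)
    (hVε : Vε = fun y : ℝ =>
      ((Us y : ℂ) + ((ε ^ ((2 : ℝ) / 3) : ℝ) : ℂ) * τ) * Heav (y - a)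
        + ((ε ^ ((2 : ℝ) / 3) : ℝ) : ℂ) * V ((y - a) / ε ^ ((1 : ℝ) / 3)))
    (Rε : ℝ → ℂ)
    (hRε : Rε = fun y : ℝ =>
      ((ε : ℝ) : ℂ) *
        (Complex.I * τ *
            ((((ε ^ (-(2 : ℝ) / 3) : ℝ) * Us y
                - (b / 2) * ((y - a) / ε ^ ((1 : ℝ) / 3)) ^ 2 : ℝ) : ℂ) *
                deriv V ((y - a) / ε ^ ((1 : ℝ) / 3))
              - (((ε ^ (-(1 : ℝ) / 3) : ℝ) * deriv Us y
                  - b * ((y - a) / ε ^ ((1 : ℝ) / 3)) : ℝ) : ℂ) *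
                V ((y - a) / ε ^ ((1 : ℝ) / 3)))
          + ((ε ^ ((1 : ℝ) / 3) : ℝ) : ℂ) *
            (τ * deriv V ((y - a) / ε ^ ((1 : ℝ) / 3))
              + (((ε ^ (-(2 : ℝ) / 3) : ℝ) * Us y : ℝ) : ℂ) *
                  deriv V ((y - a) / ε ^ ((1 : ℝ) / 3))
              - (((ε ^ (-(1 : ℝ) / 3) : ℝ) * deriv Us y : ℝ) : ℂ) *
                  V ((y - a) / ε ^ ((1 : ℝ) / 3)))
          + Complex.I * ((ε ^ ((1 : ℝ) / 3) : ℝ) : ℂ) * Heav (y - a) *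
              ((deriv (deriv (deriv Us)) y : ℝ) : ℂ))) :
    ∀ y : ℝ, 0 < y → y ≠ a →
      ContDiffAt ℝ 3 Vε y ∧
      (Complex.I * τ + ((ε ^ ((1 : ℝ) / 3) : ℝ) : ℂ)) *
          ((((ε ^ ((2 : ℝ) / 3) : ℝ) : ℂ) * τ + (Us y : ℂ)) * deriv Vε y
            - ((deriv Us y : ℝ) : ℂ) * Vε y)
        + Complex.I * ((ε ^ ((4 : ℝ) / 3) : ℝ) : ℂ) * iteratedDeriv 3 Vε y
        = Rε y := by
  intro y hy hya
  set s : ℝ := ε ^ ((1 : ℝ) / 3) with hs_def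
  have hs : 0 < s := Real.rpow_pos_of_pos hε _
  have hsne : s ≠ 0 := hs.ne'
  have hsneC : (s : ℂ) ≠ 0 := by exact_mod_cast hsne
  -- power identities
  have hk2 : ε ^ ((2 : ℝ) / 3) = s ^ 2 := by
    rw [hs_def, ← Real.rpow_natCast (ε ^ ((1 : ℝ) / 3)) 2, ← Real.rpow_mul hε.le]
    norm_num
  have hk4 : ε ^ ((4 : ℝ) / 3) = s ^ 4 := by
    rw [hs_def, ← Real.rpow_natCast (ε ^ ((1 : ℝ) / 3)) 4, ← Real.rpow_mul hε.le]
    norm_num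
  have hkm1 : ε ^ (-(1 : ℝ) / 3) = s⁻¹ := by
    rw [hs_def, neg_div, Real.rpow_neg hε.le]
  have hkm2 : ε ^ (-(2 : ℝ) / 3) = (s ^ 2)⁻¹ := by
    rw [← hk2, neg_div, Real.rpow_neg hε.le]
  have hk3 : ε = s ^ 3 := by
    rw [hs_def, ← Real.rpow_natCast (ε ^ ((1 : ℝ) / 3)) 3, ← Real.rpow_mul hε.le]
    norm_num
  clear_value s
  -- the neighbourhood on which everything is smooth and `Heav` is constant
  set Uo : Set ℝ := Set.Ioi 0 ∩ Metric.ball y |y - a| with hUo_def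
  have hUo_open : IsOpen Uo := isOpen_Ioi.inter Metric.isOpen_ball
  have hyUo : y ∈ Uo := by
    refine ⟨hy, ?_⟩
    simp only [Metric.mem_ball, dist_self]
    exact abs_pos.mpr (sub_ne_zero.mpr hya)
  have hside : ∀ x ∈ Uo, (0 < x - a ↔ 0 < y - a) ∧ x ≠ a := by
    intro x hx
    have hball : |x - y| < |y - a| := by
      have := hx.2
      rwa [Metric.mem_ball, Real.dist_eq] at this
    rcases lt_or_gt_of_ne hya with h | h
    · -- y < a
      have hyA : |y - a| = a - y := by rw [abs_of_neg (by linarith)]; ring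
      have hx_lt : x < a := by
        have := (abs_lt.mp hball).2
        rw [hyA] at this; linarith
      constructor
      · constructor <;> intro hh <;> [linarith; linarith]
      · exact ne_of_lt hx_lt
    · -- a < y
      have hyA : |y - a| = y - a := abs_of_pos (by linarith)
      have hx_gt : a < x := by
        have := (abs_lt.mp hball).1
        rw [hyA] at this; linarith
      constructor
      · constructor <;> intro hh <;> [linarith; linarith]
      · exact ne_of_gt hx_gt
  set c : ℂ := Heav (y - a) with hc_def
  have hHeav : ∀ x ∈ Uo, Heav (x - a) = c := by
    intro x hx
    rw [hc_def]
    unfold Heav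
    rcases (hside x hx).1 with ⟨h1, h2⟩
    by_cases hcase : 0 < y - a
    · rw [if_pos hcase, if_pos (h2 hcase)]
    · rw [if_neg hcase, if_neg (fun hh => hcase (h1 hh))]
  have hxpos : ∀ x ∈ Uo, (0:ℝ) < x := fun x hx => hx.1
  have hwne : ∀ x ∈ Uo, (x - a) / s ≠ 0 := by
    intro x hx
    exact div_ne_zero (sub_ne_zero.mpr (hside x hx).2) hsne
  -- smoothness of pieces
  have hOioi : IsOpen (Set.Ioi (0:ℝ)) := isOpen_Ioi
  have hOc : IsOpen ({(0:ℝ)}ᶜ) := isOpen_compl_singleton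
  have hUs1 : ContDiffOn ℝ 2 (deriv Us) (Set.Ioi 0) :=
    hUs.deriv_of_isOpen hOioi (by norm_num)
  have hUs2 : ContDiffOn ℝ 1 (deriv (deriv Us)) (Set.Ioi 0) :=
    hUs1.deriv_of_isOpen hOioi (by norm_num)
  have hV1 : ContDiffOn ℝ 2 (deriv V) ({(0:ℝ)}ᶜ) :=
    hV.deriv_of_isOpen hOc (by norm_num)
  have hV2 : ContDiffOn ℝ 1 (deriv (deriv V)) ({(0:ℝ)}ᶜ) :=
    hV1.deriv_of_isOpen hOc (by norm_num)
  -- HasDerivAt for Us and its derivatives at points of Ioi 0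
  have hdUs : ∀ x : ℝ, 0 < x → HasDerivAt Us (deriv Us x) x := by
    intro x hx
    exact (((hUs.contDiffAt (hOioi.mem_nhds hx)).differentiableAt
      (by norm_num))).hasDerivAt
  have hdUs1 : ∀ x : ℝ, 0 < x → HasDerivAt (deriv Us) (deriv (deriv Us) x) x := by
    intro x hx
    exact (((hUs1.contDiffAt (hOioi.mem_nhds hx)).differentiableAt
      (by norm_num))).hasDerivAt
  have hdUs2 : ∀ x : ℝ, 0 < x →
      HasDerivAt (deriv (deriv Us)) (deriv (deriv (deriv Us)) x) x := by
    intro x hx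
    exact (((hUs2.contDiffAt (hOioi.mem_nhds hx)).differentiableAt
      (by norm_num))).hasDerivAt
  -- HasDerivAt for V and its derivatives away from 0
  have hmemc : ∀ t : ℝ, t ≠ 0 → {(0:ℝ)}ᶜ ∈ nhds t := by
    intro t ht; exact hOc.mem_nhds (by simpa using ht)
  have hdV : ∀ t : ℝ, t ≠ 0 → HasDerivAt V (deriv V t) t := by
    intro t ht
    exact (((hV.contDiffAt (hmemc t ht)).differentiableAt (by norm_num))).hasDerivAt
  have hdV1 : ∀ t : ℝ, t ≠ 0 → HasDerivAt (deriv V) (deriv (deriv V) t) t := by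
    intro t ht
    exact (((hV1.contDiffAt (hmemc t ht)).differentiableAt (by norm_num))).hasDerivAt
  have hdV2 : ∀ t : ℝ, t ≠ 0 →
      HasDerivAt (deriv (deriv V)) (deriv (deriv (deriv V)) t) t := by
    intro t ht
    exact (((hV2.contDiffAt (hmemc t ht)).differentiableAt (by norm_num))).hasDerivAt
  -- the rescaling map
  have hw : ∀ x : ℝ, HasDerivAt (fun t => (t - a) / s) s⁻¹ x := by
    intro x
    simpa [one_div] using ((hasDerivAt_id x).sub_const a).div_const s
  -- derivative of V ∘ w and iterates
  have hVw : ∀ x ∈ Uo, HasDerivAt (fun t => V ((t - a) / s))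
      ((s⁻¹ : ℝ) • deriv V ((x - a) / s)) x := by
    intro x hx
    have hcomp : HasDerivAt ((V) ∘ (fun t => (t - a) / s)) ((s⁻¹ : ℝ) • deriv V ((x - a) / s)) x :=
      HasDerivAt.scomp x (hdV _ (hwne x hx)) (hw x)
    exact hcomp
  have hVw1 : ∀ x ∈ Uo, HasDerivAt (fun t => deriv V ((t - a) / s))
      ((s⁻¹ : ℝ) • deriv (deriv V) ((x - a) / s)) x := by
    intro x hx
    have hcomp : HasDerivAt ((deriv V) ∘ (fun t => (t - a) / s)) ((s⁻¹ : ℝ) • deriv (deriv V) ((x - a) / s)) x :=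
      HasDerivAt.scomp x (hdV1 _ (hwne x hx)) (hw x)
    exact hcomp
  have hVw2 : ∀ x ∈ Uo, HasDerivAt (fun t => deriv (deriv V) ((t - a) / s))
      ((s⁻¹ : ℝ) • deriv (deriv (deriv V)) ((x - a) / s)) x := by
    intro x hx
    have hcomp : HasDerivAt ((deriv (deriv V)) ∘ (fun t => (t - a) / s)) ((s⁻¹ : ℝ) • deriv (deriv (deriv V)) ((x - a) / s)) x :=
      HasDerivAt.scomp x (hdV2 _ (hwne x hx)) (hw x)
    exact hcomp
  -- the locally–valid explicit formulas
  set g0 : ℝ → ℂ := fun t =>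
    ((Us t : ℂ) + ((s ^ 2 : ℝ) : ℂ) * τ) * c + ((s ^ 2 : ℝ) : ℂ) * V ((t - a) / s)
    with hg0_def
  set g1 : ℝ → ℂ := fun t =>
    c * ((deriv Us t : ℝ) : ℂ) + (s : ℂ) * deriv V ((t - a) / s) with hg1_def
  set g2 : ℝ → ℂ := fun t =>
    c * ((deriv (deriv Us) t : ℝ) : ℂ) + deriv (deriv V) ((t - a) / s) with hg2_def
  set g3 : ℝ → ℂ := fun t =>
    c * ((deriv (deriv (deriv Us)) t : ℝ) : ℂ)
      + (s : ℂ)⁻¹ * deriv (deriv (deriv V)) ((t - a) / s) with hg3_def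
  have hVε_eq : ∀ x ∈ Uo, Vε x = g0 x := by
    intro x hx
    rw [hVε, hg0_def]
    simp only [hk2, hHeav x hx]
  have hVε_ev : ∀ x ∈ Uo, Vε =ᶠ[nhds x] g0 := by
    intro x hx
    exact Filter.eventuallyEq_of_mem (hUo_open.mem_nhds hx) hVε_eq
  -- first derivative
  have hD1 : ∀ x ∈ Uo, HasDerivAt Vε (g1 x) x := by
    intro x hx
    have hg0 : HasDerivAt g0
        (((deriv Us x : ℝ) : ℂ) * c
          + ((s ^ 2 : ℝ) : ℂ) * ((s⁻¹ : ℝ) • deriv V ((x - a) / s))) x := by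
      have h1 : HasDerivAt (fun t => ((Us t : ℂ) + ((s ^ 2 : ℝ) : ℂ) * τ) * c)
          (((deriv Us x : ℝ) : ℂ) * c) x :=
        (((hdUs x (hxpos x hx)).ofReal_comp).add_const _).mul_const c
      have h2 : HasDerivAt (fun t => ((s ^ 2 : ℝ) : ℂ) * V ((t - a) / s))
          (((s ^ 2 : ℝ) : ℂ) * ((s⁻¹ : ℝ) • deriv V ((x - a) / s))) x :=
        (hVw x hx).const_mul _
      exact h1.add h2
    have hval : ((deriv Us x : ℝ) : ℂ) * c
        + ((s ^ 2 : ℝ) : ℂ) * ((s⁻¹ : ℝ) • deriv V ((x - a) / s)) = g1 x := by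
      rw [hg1_def]
      simp only [Complex.real_smul]
      push_cast
      field_simp
    rw [← hval]
    exact hg0.congr_of_eventuallyEq (hVε_ev x hx)
  have hderiv1 : ∀ x ∈ Uo, deriv Vε x = g1 x := fun x hx => (hD1 x hx).deriv
  -- second derivative
  have hD2 : ∀ x ∈ Uo, HasDerivAt (deriv Vε) (g2 x) x := by
    intro x hx
    have hg1 : HasDerivAt g1
        (c * ((deriv (deriv Us) x : ℝ) : ℂ)
          + (s : ℂ) * ((s⁻¹ : ℝ) • deriv (deriv V) ((x - a) / s))) x := by
      have h1 : HasDerivAt (fun t => c * ((deriv Us t : ℝ) : ℂ))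
          (c * ((deriv (deriv Us) x : ℝ) : ℂ)) x :=
        ((hdUs1 x (hxpos x hx)).ofReal_comp).const_mul c
      have h2 : HasDerivAt (fun t => (s : ℂ) * deriv V ((t - a) / s))
          ((s : ℂ) * ((s⁻¹ : ℝ) • deriv (deriv V) ((x - a) / s))) x :=
        (hVw1 x hx).const_mul _
      exact h1.add h2
    have hval : c * ((deriv (deriv Us) x : ℝ) : ℂ)
        + (s : ℂ) * ((s⁻¹ : ℝ) • deriv (deriv V) ((x - a) / s)) = g2 x := by
      rw [hg2_def]
      simp only [Complex.real_smul]
      push_cast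
      field_simp
    rw [← hval]
    refine hg1.congr_of_eventuallyEq ?_
    exact Filter.eventuallyEq_of_mem (hUo_open.mem_nhds hx) hderiv1
  have hderiv2 : ∀ x ∈ Uo, deriv (deriv Vε) x = g2 x := fun x hx => (hD2 x hx).deriv
  -- third derivative
  have hD3 : ∀ x ∈ Uo, HasDerivAt (deriv (deriv Vε)) (g3 x) x := by
    intro x hx
    have hg2 : HasDerivAt g2
        (c * ((deriv (deriv (deriv Us)) x : ℝ) : ℂ)
          + (s⁻¹ : ℝ) • deriv (deriv (deriv V)) ((x - a) / s)) x := by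
      have h1 : HasDerivAt (fun t => c * ((deriv (deriv Us) t : ℝ) : ℂ))
          (c * ((deriv (deriv (deriv Us)) x : ℝ) : ℂ)) x :=
        ((hdUs2 x (hxpos x hx)).ofReal_comp).const_mul c
      exact h1.add (hVw2 x hx)
    have hval : c * ((deriv (deriv (deriv Us)) x : ℝ) : ℂ)
        + (s⁻¹ : ℝ) • deriv (deriv (deriv V)) ((x - a) / s) = g3 x := by
      rw [hg3_def]
      simp only [Complex.real_smul]
      push_cast
      ring
    rw [← hval]
    refine hg2.congr_of_eventuallyEq ?_
    exact Filter.eventuallyEq_of_mem (hUo_open.mem_nhds hx) hderiv2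
  have hderiv3 : deriv (deriv (deriv Vε)) y = g3 y := (hD3 y hyUo).deriv
  -- iterated derivative identification
  have h3iter : ∀ f : ℝ → ℂ, iteratedDeriv 3 f = deriv (deriv (deriv f)) := by
    intro f
    rw [show (3:ℕ) = 2 + 1 from rfl, iteratedDeriv_succ,
      show (2:ℕ) = 1 + 1 from rfl, iteratedDeriv_succ, iteratedDeriv_one]
  -- ContDiffAt
  have hCD : ContDiffAt ℝ 3 Vε y := by
    have hg0cd : ContDiffAt ℝ 3 g0 y := by
      have hUsAt : ContDiffAt ℝ 3 Us y := hUs.contDiffAt (hOioi.mem_nhds hy)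
      have hUsC : ContDiffAt ℝ 3 (fun t => ((Us t : ℝ) : ℂ)) y :=
        (Complex.ofRealCLM.contDiff.of_le le_top).comp_contDiffAt y hUsAt
      have hwcd : ContDiffAt ℝ 3 (fun t : ℝ => (t - a) / s) y :=
        ((contDiff_id.sub contDiff_const).div_const s).contDiffAt
      have hVat : ContDiffAt ℝ 3 V ((y - a) / s) :=
        hV.contDiffAt (hmemc _ (hwne y hyUo))
      have hVwcd : ContDiffAt ℝ 3 (fun t : ℝ => V ((t - a) / s)) y :=
        hVat.comp y hwcd
      exact ((hUsC.add contDiffAt_const).mul contDiffAt_const).add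
        (contDiffAt_const.mul hVwcd)
    exact hg0cd.congr_of_eventuallyEq (hVε_ev y hyUo)
  refine ⟨hCD, ?_⟩
  -- the equation
  have hiterVε : iteratedDeriv 3 Vε y = g3 y := by rw [h3iter]; exact hderiv3
  have hVyy : Vε y = g0 y := hVε_eq y hyUo
  have hdVyy : deriv Vε y = g1 y := hderiv1 y hyUo
  -- third derivative of V from the ODE
  have hODE : deriv (deriv (deriv V)) ((y - a) / s)
      = -(τ * ((τ + (b : ℂ) * ((((y - a) / s : ℝ)) : ℂ) ^ 2 / 2) * deriv V ((y - a) / s)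
          - (b : ℂ) * ((((y - a) / s : ℝ)) : ℂ) * V ((y - a) / s))) := by
    have h := hVeq _ (hwne y hyUo)
    rw [h3iter] at h
    linear_combination h
  rw [hVyy, hdVyy, hiterVε, hRε]
  simp only [hg0_def, hg1_def, hg3_def]
  rw [hk2, hk4, hkm1, hkm2, hODE, hk3]
  rw [← hc_def]
  generalize (y - a) / s = zr
  push_cast
  rw [← sub_eq_zero]
  field_simp
  ring_nf
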